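/- Let T be a full binary tree with N ≥ 2 leaves whose fringe thickness (maximal difference between depths of two leaves) is at most 2, and let m = ⌈log₂ N⌉. Then every leaf of T has depth between m-2 and m+1, and moreover T cannot simultaneously have a leaf at depth m-2 and a leaf at depth m+1. -/

import Mathlib

/-- Full binary trees. -/
inductive FBT where
  | leaf : FBT
  | node : FBT → FBT → FBT

/-- The multiset of depths of the leaves of a full binary tree. -/
def FBT.leafDepths : FBT → Multiset ℕ
  | .leaf => {0}
  | .node l r => l.leafDepths.map (· + 1) + r.leafDepths.map (· + 1)

lemma FBT.kraft (T : FBT) : ((T.leafDepths).map (fun d => (2:ℚ)⁻¹ ^ d)).sum = 1 := by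
  induction T with
  | leaf => simp [FBT.leafDepths]
  | node l r ihl ihr =>
    simp only [FBT.leafDepths, Multiset.map_add, Multiset.sum_add, Multiset.map_map,
      Function.comp]
    have h : ∀ d : ℕ, (2:ℚ)⁻¹ ^ (d + 1) = 2⁻¹ * 2⁻¹ ^ d := by intro d; ring
    simp only [h, Multiset.sum_map_mul_left, ihl, ihr]
    norm_num

lemma FBT.card_eq_one_of_zero_mem (T : FBT) (h : 0 ∈ T.leafDepths) :
    Multiset.card T.leafDepths = 1 := by
  cases T with
  | leaf => rfl
  | node l r => simp [FBT.leafDepths] at h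

theorem stmt_4 (T : FBT) (N : ℕ) (hN : N = Multiset.card T.leafDepths) (hN2 : 2 ≤ N)
    (hfringe : ∀ d₁ ∈ T.leafDepths, ∀ d₂ ∈ T.leafDepths, d₁ ≤ d₂ + 2)
    (m : ℕ) (hm : m = Nat.clog 2 N) :
    (∀ d ∈ T.leafDepths, m - 2 ≤ d ∧ d ≤ m + 1) ∧
    ¬((m - 2) ∈ T.leafDepths ∧ (m + 1) ∈ T.leafDepths) := by
  have kraft := T.kraft
  have hNle : N ≤ 2 ^ m := by
    rw [hm]; exact Nat.le_pow_clog one_lt_two N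
  have main : ∀ d ∈ T.leafDepths, m - 2 ≤ d ∧ d ≤ m + 1 := by
    intro d0 hd0
    constructor
    ·
      -- each term ≥ 2^{-(d0+2)}, so N • 2^{-(d0+2)} ≤ 1, so N ≤ 2^(d0+2)
      have hterm : ∀ x ∈ (T.leafDepths).map (fun d => (2:ℚ)⁻¹ ^ d),
          (2:ℚ)⁻¹ ^ (d0 + 2) ≤ x := by
        intro x hx
        obtain ⟨d, hd, rfl⟩ := Multiset.mem_map.mp hx
        apply pow_le_pow_of_le_one (by norm_num) (by norm_num)
        exact hfringe d hd d0 hd0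
      have := Multiset.card_nsmul_le_sum hterm
      rw [kraft, Multiset.card_map, ← hN] at this
      have h2 : (N : ℚ) ≤ 2 ^ (d0 + 2) := by
        rw [nsmul_eq_mul] at this
        have hp : (0:ℚ) < 2⁻¹ ^ (d0 + 2) := by positivity
        have h2p : ((2:ℚ)⁻¹) ^ (d0 + 2) * 2 ^ (d0 + 2) = 1 := by
          rw [← mul_pow]; norm_num
        nlinarith [this, hp]
      have h3 : N ≤ 2 ^ (d0 + 2) := by exact_mod_cast h2
      have h4 : m ≤ d0 + 2 := by
        rw [hm]; exact (Nat.clog_le_iff_le_pow one_lt_two).mpr h3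
      omega
    · -- upper bound
      by_contra hcon
      push_neg at hcon
      have hd0m : m + 2 ≤ d0 := hcon
      -- every depth ≥ m
      have hall : ∀ d ∈ T.leafDepths, m ≤ d := by
        intro d hd
        have := hfringe d0 hd0 d hd
        omega
      obtain ⟨S', hS'⟩ := Multiset.exists_cons_of_mem hd0
      have hsum : (2:ℚ)⁻¹ ^ d0 + (S'.map (fun d => (2:ℚ)⁻¹ ^ d)).sum = 1 := by
        rw [← kraft, hS']; simp
      have hbound : ∀ x ∈ S'.map (fun d => (2:ℚ)⁻¹ ^ d), x ≤ (2:ℚ)⁻¹ ^ m := by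
        intro x hx
        obtain ⟨d, hd, rfl⟩ := Multiset.mem_map.mp hx
        apply pow_le_pow_of_le_one (by norm_num) (by norm_num)
        exact hall d (hS' ▸ Multiset.mem_cons_of_mem hd)
      have hsum' := Multiset.sum_le_card_nsmul _ _ hbound
      rw [Multiset.card_map] at hsum'
      have hcard' : (Multiset.card S' : ℚ) = N - 1 := by
        have : Multiset.card T.leafDepths = Multiset.card S' + 1 := by rw [hS']; simp
        have hn : N = Multiset.card S' + 1 := by omega
        push_cast [hn]; ring
      rw [nsmul_eq_mul, hcard'] at hsum'
      have hd0le : (2:ℚ)⁻¹ ^ d0 ≤ 2⁻¹ ^ (m + 2) :=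
        pow_le_pow_of_le_one (by norm_num) (by norm_num) hd0m
      have hNQ : (N : ℚ) ≤ 2 ^ m := by exact_mod_cast hNle
      have hpm : ((2:ℚ)⁻¹) ^ m * 2 ^ m = 1 := by rw [← mul_pow]; norm_num
      have hpme : (2:ℚ)⁻¹ ^ (m + 2) = 2⁻¹ ^ m * 4⁻¹ := by rw [pow_add]; norm_num
      have hppos : (0:ℚ) < 2⁻¹ ^ m := by positivity
      nlinarith [hsum, hsum', hd0le, hNQ, hpm, hppos]
  refine ⟨main, ?_⟩
  rintro ⟨h1, h2⟩
  by_cases hm2 : 2 ≤ m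
  · have := hfringe (m + 1) h2 (m - 2) h1
    omega
  · -- m ≤ 1, so N ≤ 2; but m - 2 = 0 ∈ leafDepths means T is a leaf, card = 1
    have h0 : (0:ℕ) ∈ T.leafDepths := by
      have he : m - 2 = 0 := by omega
      rwa [he] at h1
    have := T.card_eq_one_of_zero_mem h0
    omega
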